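/- For positive integers m ≤ n, ∑_{k=1}^{m} (n−k)!/(m−k)! · [ψ₀(n−k+1)² + ψ₁(n−k+1)] = n!/((m−1)!(n−m+1)³) · [(n−m+1)²ψ₁(n+1) − 2(n−m+1)ψ₀(n+1) + (n−m+1)²ψ₀(n+1)² + 2]. -/

import Mathlib

open Finset

/-- The `m`-th polygamma function: the `(m+1)`-th derivative of `log ∘ Γ`. -/
noncomputable def psi (m : ℕ) (x : ℝ) : ℝ :=
  iteratedDeriv (m + 1) (fun y => Real.log (Real.Gamma y)) x

noncomputable def lg : ℝ → ℝ := fun y => Real.log (Real.Gamma y)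

lemma contDiffAt_lg {x : ℝ} (hx : 0 < x) : ContDiffAt ℝ ⊤ lg x := by
  have hG : AnalyticAt ℂ Complex.Gamma (x : ℂ) := by
    apply DifferentiableOn.analyticAt (s := {w : ℂ | 0 < w.re})
    · intro w hw
      exact (Complex.differentiableAt_Gamma w (fun m => by
        intro h; rw [h] at hw; simp at hw; nlinarith [hw, Nat.cast_nonneg (α := ℝ) m])).differentiableWithinAt
    · exact (isOpen_lt continuous_const Complex.continuous_re).mem_nhds (by simpa using hx)
  have hGR : ContDiffAt ℝ ⊤ Real.Gamma x := by
    have h1 : ContDiffAt ℝ ⊤ (fun y : ℝ => (Complex.Gamma (y : ℂ)).re) x := by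
      exact Complex.reCLM.contDiff.contDiffAt.comp x
        ((hG.contDiffAt.restrict_scalars ℝ).comp x Complex.ofRealCLM.contDiff.contDiffAt)
    apply h1.congr_of_eventuallyEq
    filter_upwards with y using (by rw [Complex.Gamma_ofReal]; rfl)
  have hpos := Real.Gamma_pos_of_pos hx
  exact (Real.contDiffAt_log.mpr hpos.ne').comp x hGR

noncomputable def p0 : ℝ → ℝ := deriv lg
noncomputable def p1 : ℝ → ℝ := deriv p0

lemma contDiffOn_lg : ContDiffOn ℝ ⊤ lg (Set.Ioi 0) :=
  fun x hx => (contDiffAt_lg hx).contDiffWithinAt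

lemma contDiffOn_p0 : ContDiffOn ℝ ⊤ p0 (Set.Ioi 0) :=
  contDiffOn_lg.deriv_of_isOpen isOpen_Ioi (by exact le_top)

lemma diff_lg {x : ℝ} (hx : 0 < x) : DifferentiableAt ℝ lg x :=
  (contDiffAt_lg hx).differentiableAt (by simp)

lemma diff_p0 {x : ℝ} (hx : 0 < x) : DifferentiableAt ℝ p0 x :=
  ((contDiffOn_p0.differentiableOn (by simp)).differentiableAt (isOpen_Ioi.mem_nhds hx))

lemma lg_rec {x : ℝ} (hx : 0 < x) : lg (x + 1) = Real.log x + lg x := by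
  unfold lg
  rw [Real.Gamma_add_one hx.ne', Real.log_mul hx.ne' (Real.Gamma_pos_of_pos hx).ne']

lemma p0_rec {x : ℝ} (hx : 0 < x) : p0 (x + 1) = x⁻¹ + p0 x := by
  have h1 : deriv (fun y => lg (y + 1)) x = p0 (x + 1) := by
    rw [deriv_comp_add_const]; rfl
  have h2 : (fun y => lg (y + 1)) =ᶠ[nhds x] fun y => Real.log y + lg y := by
    filter_upwards [isOpen_Ioi.mem_nhds hx] with y hy using lg_rec hy
  rw [← h1, h2.deriv_eq, deriv_fun_add (Real.differentiableAt_log hx.ne') (diff_lg hx),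
    Real.deriv_log]
  rfl

lemma p1_rec {x : ℝ} (hx : 0 < x) : p1 (x + 1) = -(x ^ 2)⁻¹ + p1 x := by
  have h1 : deriv (fun y => p0 (y + 1)) x = p1 (x + 1) := by
    rw [deriv_comp_add_const]; rfl
  have h2 : (fun y => p0 (y + 1)) =ᶠ[nhds x] fun y => y⁻¹ + p0 y := by
    filter_upwards [isOpen_Ioi.mem_nhds hx] with y hy using p0_rec hy
  rw [← h1, h2.deriv_eq, deriv_fun_add (differentiableAt_inv hx.ne') (diff_p0 hx), deriv_inv]
  rfl

lemma psi0_eq (x : ℝ) : psi 0 x = p0 x := by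
  show iteratedDeriv 1 (fun y => Real.log (Real.Gamma y)) x = p0 x
  rw [iteratedDeriv_one]; rfl

lemma psi1_eq (x : ℝ) : psi 1 x = p1 x := by
  show iteratedDeriv (1 + 1) (fun y => Real.log (Real.Gamma y)) x = p1 x
  rw [iteratedDeriv_succ, iteratedDeriv_one]; rfl

lemma psi0_rec {x : ℝ} (hx : 0 < x) : psi 0 (x + 1) = x⁻¹ + psi 0 x := by
  rw [psi0_eq, psi0_eq]; exact p0_rec hx

lemma psi1_rec {x : ℝ} (hx : 0 < x) : psi 1 (x + 1) = -(x ^ 2)⁻¹ + psi 1 x := by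
  rw [psi1_eq, psi1_eq]; exact p1_rec hx

lemma key (a : ℕ) : ∀ b : ℕ,
    ∑ j ∈ range (b+1), ((a+j).factorial : ℝ) / (j.factorial : ℝ) *
      ((psi 0 ((a:ℝ)+(j:ℝ)+1))^2 + psi 1 ((a:ℝ)+(j:ℝ)+1))
    = ((a+b+1).factorial : ℝ) / ((b.factorial : ℝ) * ((a:ℝ)+1)^3) *
      (((a:ℝ)+1)^2 * psi 1 ((a:ℝ)+(b:ℝ)+2) - 2*((a:ℝ)+1)*psi 0 ((a:ℝ)+(b:ℝ)+2)
        + ((a:ℝ)+1)^2*(psi 0 ((a:ℝ)+(b:ℝ)+2))^2 + 2) := by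
  intro b
  induction b with
  | zero =>
    simp only [zero_add, Finset.sum_range_one, Nat.cast_zero, add_zero, Nat.add_zero, Nat.factorial_zero,
      Nat.cast_one, one_mul]
    have hpos : (0:ℝ) < (a:ℝ) + 1 := by positivity
    rw [show (a:ℝ) + 2 = ((a:ℝ) + 1) + 1 by ring, psi0_rec hpos, psi1_rec hpos,
      Nat.factorial_succ]
    have h1 : ((a:ℝ) + 1) ≠ 0 := by positivity
    have h2 : (a.factorial : ℝ) ≠ 0 := by positivity
    push_cast
    field_simp
    ring
  | succ b ih =>
    rw [Finset.sum_range_succ, ih]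
    push_cast
    have hX : (0:ℝ) < (a:ℝ) + (b:ℝ) + 2 := by positivity
    have f1 : (a+(b+1)).factorial = (a+b+1).factorial := rfl
    have f2 : ((a+(b+1)+1).factorial : ℝ) = ((a:ℝ)+(b:ℝ)+2) * ((a+b+1).factorial : ℝ) := by
      rw [show a+(b+1)+1 = (a+b+1)+1 from rfl, Nat.factorial_succ]; push_cast; ring
    have f3 : (((b+1)).factorial : ℝ) = ((b:ℝ)+1) * (b.factorial : ℝ) := by
      rw [Nat.factorial_succ]; push_cast; ring
    rw [f1, f2, f3,
      show (a:ℝ) + ((b:ℝ)+1) + 1 = (a:ℝ) + (b:ℝ) + 2 by ring,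
      show (a:ℝ) + ((b:ℝ)+1) + 2 = ((a:ℝ) + (b:ℝ) + 2) + 1 by ring,
      psi0_rec hX, psi1_rec hX]
    have h1 : ((a:ℝ) + 1) ≠ 0 := by positivity
    have h2 : ((a+b+1).factorial : ℝ) ≠ 0 := by positivity
    have h3 : (b.factorial : ℝ) ≠ 0 := by positivity
    have h4 : ((b:ℝ) + 1) ≠ 0 := by positivity
    have h5 : ((a:ℝ) + (b:ℝ) + 2) ≠ 0 := ne_of_gt hX
    field_simp
    ring

theorem stmt_19 (m n : ℕ) (hm : 0 < m) (hmn : m ≤ n) :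
    ∑ k ∈ Icc 1 m, ((Nat.factorial (n - k) : ℝ) / (Nat.factorial (m - k) : ℝ)) * ((psi 0 ((n : ℝ) - k + 1))^2 + psi 1 ((n : ℝ) - k + 1)) =
      (Nat.factorial n : ℝ) / ((Nat.factorial (m - 1) : ℝ) * ((n : ℝ) - m + 1)^3) *
        (((n : ℝ) - m + 1)^2 * psi 1 ((n : ℝ) + 1) - 2 * ((n : ℝ) - m + 1) * psi 0 ((n : ℝ) + 1) +
          ((n : ℝ) - m + 1)^2 * (psi 0 ((n : ℝ) + 1))^2 + 2) := by
  have hL : ∑ k ∈ Icc 1 m, ((Nat.factorial (n - k) : ℝ) / (Nat.factorial (m - k) : ℝ)) *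
        ((psi 0 ((n : ℝ) - k + 1))^2 + psi 1 ((n : ℝ) - k + 1))
      = ∑ j ∈ range ((m-1)+1), (((n-m)+j).factorial : ℝ) / (j.factorial : ℝ) *
        ((psi 0 ((↑(n-m):ℝ)+(j:ℝ)+1))^2 + psi 1 ((↑(n-m):ℝ)+(j:ℝ)+1)) := by
    rw [show (m-1)+1 = m from by omega]
    apply Finset.sum_nbij' (i := fun k => m - k) (j := fun j => m - j)
    · intro k hk
      simp only [Finset.mem_Icc] at hk
      simp only [Finset.mem_range]
      omega
    · intro j hj
      simp only [Finset.mem_range] at hj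
      simp only [Finset.mem_Icc]
      omega
    · intro k hk
      simp only [Finset.mem_Icc] at hk
      omega
    · intro j hj
      simp only [Finset.mem_range] at hj
      omega
    · intro k hk
      simp only [Finset.mem_Icc] at hk
      have e1 : (n-m)+(m-k) = n - k := by omega
      have e2 : (↑(n-m):ℝ)+(↑(m-k):ℝ)+1 = (n:ℝ) - (k:ℝ) + 1 := by
        rw [Nat.cast_sub hmn, Nat.cast_sub hk.2]; ring
      rw [e1, e2]
  rw [hL, key (n-m) (m-1)]
  have e1 : (n-m)+(m-1)+1 = n := by omega
  have e3 : (↑(n-m):ℝ) + (↑(m-1):ℝ) + 2 = (n:ℝ)+1 := by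
    rw [Nat.cast_sub hmn, Nat.cast_sub hm]; push_cast; ring
  have e2 : (↑(n-m):ℝ) = (n:ℝ) - (m:ℝ) := Nat.cast_sub hmn
  rw [e1, e3, e2]
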